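/- Let N ≥ 1 and a be integers with 1 ≤ a ≤ N, and let n be a nonnegative integer. For every complex number z with |z| < 1, ∏_{k=0}^{n} (Nk+a)² / ((Nk+a)² − z²) = ∑_{k=0}^{n} [N · ((a/N)_{n+1})² / ((n−k)! · (2a/N)_{n+k+1})] · [(2a/N)_k / (k! · (Nk+a))] · 2(−1)^k (Nk+a)² / ((Nk+a)² − z²). -/

import Mathlib

open Finset

/-- The Pochhammer symbol (rising factorial) `(x)_n = x(x+1)⋯(x+n−1)`. -/
noncomputable def poch (x : ℝ) (n : ℕ) : ℝ := (ascPochhammer ℝ n).eval x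

lemma poch_eq_prod (x : ℝ) (n : ℕ) : poch x n = ∏ j ∈ range n, (x + j) := by
  induction n with
  | zero => simp [poch]
  | succ n ih =>
      rw [poch, ascPochhammer_succ_eval, ← poch, ih, prod_range_succ]

lemma poch_pos {x : ℝ} (hx : 0 < x) (n : ℕ) : 0 < poch x n :=
  ascPochhammer_pos n x hx

lemma poch_add (x : ℝ) (m n : ℕ) : poch x (m + n) = poch x m * poch (x + m) n := by
  simp_rw [poch_eq_prod, prod_range_add]
  congr 1
  refine prod_congr rfl fun j _ => ?_
  push_cast; ring

lemma prod_erase_range {M : Type*} [CommMonoid M] (f : ℕ → M) {k n : ℕ} (hk : k ≤ n) :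
    ∏ j ∈ (range (n+1)).erase k, f j
      = (∏ j ∈ range k, f j) * ∏ j ∈ Ico (k+1) (n+1), f j := by
  rw [← prod_union]
  · apply prod_congr _ fun _ _ => rfl
    ext j
    simp only [mem_erase, mem_range, mem_union, mem_Ico]
    omega
  · rw [Finset.disjoint_left]
    intro j hj hj'
    simp only [mem_range] at hj
    simp only [mem_Ico] at hj'
    omega

lemma prod_sub_fact {k n : ℕ} (hk : k ≤ n) :
    ∏ j ∈ (range (n+1)).erase k, ((k:ℝ) - j)
      = (-1)^(n-k) * k.factorial * (n-k).factorial := by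
  rw [prod_erase_range _ hk]
  have h1 : ∏ j ∈ range k, ((k:ℝ) - j) = k.factorial := by
    rw [← prod_range_reflect]
    have : ∀ j ∈ range k, (k:ℝ) - (k - 1 - j : ℕ) = (j + 1 : ℕ) := by
      intro j hj
      simp only [mem_range] at hj
      have : (k - 1 - j : ℕ) = k - 1 - j := rfl
      rw [Nat.cast_sub (by omega), Nat.cast_sub (by omega)]
      push_cast
      ring
    rw [prod_congr rfl this, ← Nat.cast_prod, prod_range_add_one_eq_factorial]
  have h2 : ∏ j ∈ Ico (k+1) (n+1), ((k:ℝ) - j) = (-1)^(n-k) * (n-k).factorial := by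
    rw [prod_Ico_eq_prod_range]
    have hc : n + 1 - (k + 1) = n - k := by omega
    rw [hc]
    have : ∀ j ∈ range (n-k), (k:ℝ) - ((k + 1 + j : ℕ) : ℝ) = (-1) * ((j + 1 : ℕ)) := by
      intro j hj; push_cast; ring
    rw [prod_congr rfl this, prod_mul_distrib, prod_const, card_range, ← Nat.cast_prod,
      prod_range_add_one_eq_factorial]
  rw [h1, h2]; ring

lemma key_alg (Nr Q Rk S F K pk s1 s2 : ℝ) (hN : Nr ≠ 0) (hRk : Rk ≠ 0)
    (hS : S ≠ 0) (hF : F ≠ 0) (hK : K ≠ 0) (hpk : pk ≠ 0) (n : ℕ) :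
    s1 * s2 * (Nr^(n+1) * Q)^2
      = (Nr * Q^2 / (F * (Rk * S))) * (Rk / (K * pk)) * (2 * s1 * pk^2)
        * (Nr^n * (s2 * K * F) * (Nr^(n+1) * S / (2*pk))) := by
  field_simp
  ring

lemma key_real (N a n k : ℕ) (h1 : 1 ≤ a) (h2 : 1 ≤ N) (hk : k ≤ n) :
    (-1:ℝ)^n * ∏ j ∈ range (n+1), ((N:ℝ)*j+a)^2
      = ((N:ℝ) * poch ((a:ℝ)/N) (n+1)^2 /
            ((n-k).factorial * poch (2*(a:ℝ)/N) (n+k+1)))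
        * (poch (2*(a:ℝ)/N) k / (k.factorial * ((N:ℝ)*k+a)))
        * (2 * (-1:ℝ)^k * ((N:ℝ)*k+a)^2)
        * ∏ j ∈ (range (n+1)).erase k, (((N:ℝ)*k+a)^2 - ((N:ℝ)*j+a)^2) := by
  have hN : (0:ℝ) < N := by exact_mod_cast h2.trans_lt' (by norm_num)
  have ha : (0:ℝ) < a := by exact_mod_cast h1.trans_lt' (by norm_num)
  have hN' : (N:ℝ) ≠ 0 := ne_of_gt hN
  have hkmem : k ∈ range (n+1) := mem_range.mpr (by omega)
  have hcard : ((range (n+1)).erase k).card = n := by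
    rw [card_erase_of_mem hkmem, card_range]
    omega
  -- product of squares
  have E1 : ∏ j ∈ range (n+1), ((N:ℝ)*j+a)^2
      = ((N:ℝ)^(n+1) * poch ((a:ℝ)/N) (n+1))^2 := by
    rw [prod_pow]
    congr 1
    calc ∏ j ∈ range (n+1), ((N:ℝ)*j+a)
        = ∏ j ∈ range (n+1), ((N:ℝ) * ((a:ℝ)/N + j)) := by
          refine prod_congr rfl fun j _ => ?_
          field_simp
          ring
      _ = (N:ℝ)^(n+1) * poch ((a:ℝ)/N) (n+1) := by
          rw [prod_mul_distrib, prod_const, card_range, poch_eq_prod]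
  -- split the erase product
  have E2 : ∏ j ∈ (range (n+1)).erase k, (((N:ℝ)*k+a)^2 - ((N:ℝ)*j+a)^2)
      = (∏ j ∈ (range (n+1)).erase k, ((N:ℝ) * ((k:ℝ) - j)))
        * ∏ j ∈ (range (n+1)).erase k, ((N:ℝ)*k + (N:ℝ)*j + 2*a) := by
    rw [← prod_mul_distrib]
    refine prod_congr rfl fun j _ => ?_
    ring
  have E3 : ∏ j ∈ (range (n+1)).erase k, ((N:ℝ) * ((k:ℝ) - j))
      = (N:ℝ)^n * ((-1)^(n-k) * k.factorial * (n-k).factorial) := by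
    rw [prod_mul_distrib, prod_const, hcard, prod_sub_fact hk]
  have E4 : ∏ j ∈ range (n+1), ((N:ℝ)*k + (N:ℝ)*j + 2*a)
      = (N:ℝ)^(n+1) * poch (2*(a:ℝ)/N + k) (n+1) := by
    calc ∏ j ∈ range (n+1), ((N:ℝ)*k + (N:ℝ)*j + 2*a)
        = ∏ j ∈ range (n+1), ((N:ℝ) * ((2*(a:ℝ)/N + k) + j)) := by
          refine prod_congr rfl fun j _ => ?_
          field_simp
          ring
      _ = (N:ℝ)^(n+1) * poch (2*(a:ℝ)/N + k) (n+1) := by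
          rw [prod_mul_distrib, prod_const, card_range, poch_eq_prod]
  have hpk : (0:ℝ) < (N:ℝ)*k+a := by positivity
  have hgk : (0:ℝ) < (N:ℝ)*k + (N:ℝ)*k + 2*a := by positivity
  have E5 : ∏ j ∈ (range (n+1)).erase k, ((N:ℝ)*k + (N:ℝ)*j + 2*a)
      = (N:ℝ)^(n+1) * poch (2*(a:ℝ)/N + k) (n+1) / (2*((N:ℝ)*k + a)) := by
    have h2pk : 2*((N:ℝ)*k + a) = (N:ℝ)*k + (N:ℝ)*k + 2*a := by ring
    rw [h2pk, eq_div_iff (ne_of_gt hgk), mul_comm, ← E4]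
    exact mul_prod_erase (range (n+1)) (fun j => (N:ℝ)*k + (N:ℝ)*j + 2*a) hkmem
  have E6 : poch (2*(a:ℝ)/N) (n+k+1)
      = poch (2*(a:ℝ)/N) k * poch (2*(a:ℝ)/N + k) (n+1) := by
    have h : n+k+1 = k+(n+1) := by omega
    rw [h, poch_add]
  have hsign : (-1:ℝ)^n = (-1)^k * (-1)^(n-k) := by
    rw [← pow_add]
    congr 1
    omega
  have hQ : (0:ℝ) < poch ((a:ℝ)/N) (n+1) := poch_pos (by positivity) _
  have hRk : (0:ℝ) < poch (2*(a:ℝ)/N) k := poch_pos (by positivity) _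
  have hS : (0:ℝ) < poch (2*(a:ℝ)/N + k) (n+1) := poch_pos (by positivity) _
  have hF : ((n-k).factorial : ℝ) ≠ 0 := by positivity
  have hK : ((k).factorial : ℝ) ≠ 0 := by positivity
  rw [E1, E2, E3, E5, E6, hsign]
  exact key_alg (N:ℝ) _ _ _ _ _ _ _ _ hN' (ne_of_gt hRk) (ne_of_gt hS) hF hK
    (ne_of_gt hpk) n

lemma key_complex (N a n k : ℕ) (h1 : 1 ≤ a) (h2 : 1 ≤ N) (hk : k ≤ n) :
    (-1:ℂ)^n * ∏ j ∈ range (n+1), ((N:ℂ)*j+a)^2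
      = (((N : ℝ) * poch ((a : ℝ) / N) (n + 1) ^ 2 /
            ((n - k).factorial * poch (2 * (a : ℝ) / N) (n + k + 1)) : ℝ) : ℂ)
        * ((poch (2 * (a : ℝ) / N) k / (k.factorial * ((N : ℝ) * k + a)) : ℝ) : ℂ)
        * (2 * (-1:ℂ)^k * ((N:ℂ)*k+a)^2)
        * ∏ j ∈ (range (n+1)).erase k, (((N:ℂ)*k+a)^2 - ((N:ℂ)*j+a)^2) := by
  have h := congrArg (Complex.ofReal) (key_real N a n k h1 h2 hk)
  push_cast at h ⊢
  linear_combination h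

lemma term_alg (E G P vkz A B C s : ℂ) (hE : E ≠ 0) (hG : G ≠ 0) (hvkz : vkz ≠ 0)
    (h : s * P = A * B * C * E) :
    (E⁻¹ * (s * G)) * (P / (vkz * G)) = A * B * (C / vkz) := by
  field_simp
  linear_combination h

/-- The partial-fraction expansion used in the proof of Theorem 2.3 (case `d = 0`):
for `1 ≤ a ≤ N`, `n ≥ 0` and `|z| < 1`,
`∏_{k=0}^{n} (Nk+a)²/((Nk+a)²−z²)
  = ∑_{k=0}^{n} [N·((a/N)_{n+1})²/((n−k)!·(2a/N)_{n+k+1})]·[(2a/N)_k/(k!·(Nk+a))]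
      · 2(−1)^k (Nk+a)²/((Nk+a)²−z²)`. -/
theorem prod_sq_div_sq_sub_eq_sum
    (N a : ℕ) (h1 : 1 ≤ a) (h2 : a ≤ N) (n : ℕ) (z : ℂ) (hz : ‖z‖ < 1) :
    ∏ k ∈ Finset.range (n + 1),
        ((N : ℂ) * k + a) ^ 2 / (((N : ℂ) * k + a) ^ 2 - z ^ 2)
      = ∑ k ∈ Finset.range (n + 1),
          (((N : ℝ) * poch ((a : ℝ) / N) (n + 1) ^ 2 /
              ((n - k).factorial * poch (2 * (a : ℝ) / N) (n + k + 1)) : ℝ) : ℂ) *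
            ((poch (2 * (a : ℝ) / N) k / (k.factorial * ((N : ℝ) * k + a)) : ℝ) : ℂ) *
            (2 * (-1 : ℂ) ^ k * ((N : ℂ) * k + a) ^ 2 /
              (((N : ℂ) * k + a) ^ 2 - z ^ 2)) := by
  have hN : 1 ≤ N := h1.trans h2
  set v : ℕ → ℂ := fun j => ((N:ℂ)*j+a)^2 with hv
  have hm : ∀ j : ℕ, ((N:ℂ)*j+a) = ((N*j+a : ℕ) : ℂ) := by intro j; push_cast; ring
  have hnorm : ∀ j : ℕ, (1:ℝ) ≤ ‖v j‖ := by
    intro j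
    simp only [hv, hm j, norm_pow, Complex.norm_natCast]
    have h1' : (1:ℝ) ≤ ((N*j+a : ℕ) : ℝ) := by exact_mod_cast Nat.one_le_iff_ne_zero.mpr (by omega)
    nlinarith
  have hzsq : ‖z^2‖ < 1 := by
    rw [norm_pow]
    nlinarith [norm_nonneg z]
  have hzn : ∀ j, v j - z^2 ≠ 0 := by
    intro j h
    rw [sub_eq_zero] at h
    have := hnorm j
    rw [h] at this
    linarith
  have hinj : Set.InjOn v (range (n+1)) := by
    intro i _ j _ h
    simp only [hv, hm i, hm j] at h
    have h'' : (N*i+a)^2 = (N*j+a)^2 := by exact_mod_cast h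
    have h3 := Nat.pow_left_injective (by norm_num) h''
    have h4 : N*i = N*j := by omega
    exact Nat.eq_of_mul_eq_mul_left (by omega) h4
  have hvne : ∀ k ∈ range (n+1), ∀ j ∈ (range (n+1)).erase k, v k - v j ≠ 0 := by
    intro k hk j hj
    rw [sub_ne_zero]
    rcases mem_erase.mp hj with ⟨hjk, hj'⟩
    exact fun h => hjk (hinj hj' hk h.symm)
  -- Lagrange interpolation of the constant 1
  have hBig := Lagrange.sum_basis hinj ⟨0, mem_range.mpr (by omega)⟩
  have H : ∑ k ∈ range (n+1),
      ∏ j ∈ (range (n+1)).erase k, ((v k - v j)⁻¹ * (z^2 - v j)) = 1 := by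
    have h := congrArg (Polynomial.eval (z^2)) hBig
    simpa [Lagrange.basis, Lagrange.basisDivisor, Polynomial.eval_finset_sum,
      Polynomial.eval_prod] using h
  have expand : (∏ j ∈ range (n+1), v j) / (∏ j ∈ range (n+1), (v j - z^2))
      = ∑ k ∈ range (n+1),
          (∏ j ∈ (range (n+1)).erase k, ((v k - v j)⁻¹ * (z^2 - v j)))
            * ((∏ j ∈ range (n+1), v j) / (∏ j ∈ range (n+1), (v j - z^2))) := by
    rw [← sum_mul, H, one_mul]
  rw [prod_div_distrib, expand]
  refine sum_congr rfl fun k hk => ?_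
  have hkn : k ≤ n := by have := mem_range.mp hk; omega
  have hcard : ((range (n+1)).erase k).card = n := by
    rw [card_erase_of_mem hk, card_range]
    omega
  have hE : (∏ j ∈ (range (n+1)).erase k, (v k - v j)) ≠ 0 :=
    prod_ne_zero_iff.mpr (hvne k hk)
  have hG : (∏ j ∈ (range (n+1)).erase k, (v j - z^2)) ≠ 0 :=
    prod_ne_zero_iff.mpr fun j _ => hzn j
  have hsplit : ∏ j ∈ (range (n+1)).erase k, ((v k - v j)⁻¹ * (z^2 - v j))
      = (∏ j ∈ (range (n+1)).erase k, (v k - v j))⁻¹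
        * ((-1:ℂ)^n * ∏ j ∈ (range (n+1)).erase k, (v j - z^2)) := by
    rw [prod_mul_distrib, prod_inv_distrib]
    congr 1
    calc ∏ j ∈ (range (n+1)).erase k, (z^2 - v j)
        = ∏ j ∈ (range (n+1)).erase k, ((-1) * (v j - z^2)) := by
          refine prod_congr rfl fun j _ => ?_; ring
      _ = (-1:ℂ)^n * ∏ j ∈ (range (n+1)).erase k, (v j - z^2) := by
          rw [prod_mul_distrib, prod_const, hcard]
  have hD : ∏ j ∈ range (n+1), (v j - z^2)
      = (v k - z^2) * ∏ j ∈ (range (n+1)).erase k, (v j - z^2) :=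
    (mul_prod_erase _ _ hk).symm
  have hkey := key_complex N a n k h1 hN hkn
  rw [hsplit, hD]
  exact term_alg _ _ _ _ _ _ _ _ hE hG (hzn k) hkey
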